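/- Let k ≥ 3, 0 < α < 1, and let G be an r-regular k-partite k-uniform hypergraph with each partition class of order n ≥ 3. Suppose that for every partition class Z and every S ⊆ Z with |S| ≤ r one has |N_G(S)| ≥ (k-1-α)·r·|S|. Then r ≤ √(2n). -/

import Mathlib

/-- External neighbourhood of a vertex set `S` in a hypergraph with edge set `E`. -/
def hyperNbhd {V : Type*} [DecidableEq V] (E : Finset (Finset V)) (S : Finset V) :
    Finset V :=
  ((E.filter fun e => (e ∩ S).Nonempty).biUnion id) \ S

/-- If an `r`-regular `k`-partite `k`-uniform hypergraph with classes of order `n ≥ 3`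
satisfies the expansion property `Exp₁(α)` (small sets expand by `(k-1-α)r`), then
`r ≤ √(2n)`. -/
theorem r_le_sqrt_two_n
    {V : Type*} [Fintype V] [DecidableEq V]
    (k r n : ℕ) (hk : 3 ≤ k) (α : ℝ) (hα0 : 0 < α) (hα1 : α < 1) (hn : 3 ≤ n)
    (E : Finset (Finset V)) (parts : Fin k → Finset V)
    (hdisj : ∀ i j : Fin k, i ≠ j → Disjoint (parts i) (parts j))
    (hcover : ∀ v : V, ∃ i, v ∈ parts i)
    (hcard : ∀ i, (parts i).card = n)
    (hedge : ∀ e ∈ E, ∀ i, (e ∩ parts i).card = 1)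
    (hreg : ∀ v : V, (E.filter fun e => v ∈ e).card = r)
    (hexp : ∀ i : Fin k, ∀ S ⊆ parts i, S.card ≤ r →
      ((k : ℝ) - 1 - α) * r * S.card ≤ ((hyperNbhd E S).card : ℝ)) :
    (r : ℝ) ≤ Real.sqrt (2 * n) := by
  have hi : (0:ℕ) < k := by omega
  set i₀ : Fin k := ⟨0, hi⟩ with hi₀
  -- the neighbourhood of any S ⊆ parts i₀ avoids parts i₀
  have hbound : ∀ S ⊆ parts i₀, ((hyperNbhd E S).card : ℝ) ≤ ((k:ℝ) - 1) * n := by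
    intro S hS
    have hsub : hyperNbhd E S ⊆ (Finset.univ.erase i₀).biUnion parts := by
      intro v hv
      simp only [hyperNbhd, Finset.mem_sdiff, Finset.mem_biUnion, Finset.mem_filter, id] at hv
      obtain ⟨⟨e, ⟨heE, hne⟩, hve⟩, hvS⟩ := hv
      obtain ⟨j, hj⟩ := hcover v
      refine Finset.mem_biUnion.mpr ⟨j, Finset.mem_erase.mpr ⟨?_, Finset.mem_univ j⟩, hj⟩
      rintro rfl
      obtain ⟨w, hw⟩ := hne
      rw [Finset.mem_inter] at hw
      have hw' : w ∈ e ∩ parts i₀ := Finset.mem_inter.mpr ⟨hw.1, hS hw.2⟩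
      have hv' : v ∈ e ∩ parts i₀ := Finset.mem_inter.mpr ⟨hve, hj⟩
      have h1 := hedge e heE i₀
      have hvw : v = w := Finset.card_le_one.mp (le_of_eq h1) _ hv' _ hw'
      exact hvS (hvw ▸ hw.2)
    have hcardle : (hyperNbhd E S).card ≤ (k-1) * n := by
      calc (hyperNbhd E S).card
          ≤ ((Finset.univ.erase i₀).biUnion parts).card := Finset.card_le_card hsub
        _ ≤ ∑ j ∈ Finset.univ.erase i₀, (parts j).card := Finset.card_biUnion_le
        _ = (k-1) * n := by
            rw [Finset.sum_congr rfl (fun j _ => hcard j), Finset.sum_const,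
              Finset.card_erase_of_mem (Finset.mem_univ _), Finset.card_univ,
              Fintype.card_fin, smul_eq_mul]
    calc ((hyperNbhd E S).card : ℝ) ≤ (((k-1) * n : ℕ) : ℝ) := by exact_mod_cast hcardle
      _ = ((k:ℝ) - 1) * n := by
          push_cast [Nat.cast_sub (show 1 ≤ k by omega)]
          ring
  have hkR : (3:ℝ) ≤ (k:ℝ) := by exact_mod_cast hk
  have hnR : (3:ℝ) ≤ (n:ℝ) := by exact_mod_cast hn
  have hr0 : (0:ℝ) ≤ (r:ℝ) := Nat.cast_nonneg r
  have hpos : (0:ℝ) < (k:ℝ) - 1 - α := by linarith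
  have hsq : (r:ℝ) * (r:ℝ) ≤ 2 * n := by
    rcases le_or_gt r n with hrn | hrn
    · obtain ⟨S, hS, hScard⟩ := Finset.exists_subset_card_eq (s := parts i₀) (n := r) (by rw [hcard]; exact hrn)
      have h1 := hexp i₀ S hS (le_of_eq hScard)
      rw [hScard] at h1
      have h2 := hbound S hS
      have h3 : ((k:ℝ) - 1 - α) * ((r:ℝ) * r) ≤ ((k:ℝ) - 1 - α) * (2 * n) := by
        nlinarith
      exact le_of_mul_le_mul_left h3 hpos
    · have h1 := hexp i₀ (parts i₀) (Finset.Subset.refl _) (by rw [hcard]; omega)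
      rw [hcard] at h1
      have h2 := hbound (parts i₀) (Finset.Subset.refl _)
      have hr2 : (r:ℝ) ≤ 2 := by
        have h3 : ((k:ℝ) - 1 - α) * (r:ℝ) * n ≤ ((k:ℝ) - 1 - α) * 2 * n := by
          nlinarith
        have h4 : ((k:ℝ) - 1 - α) * (r:ℝ) ≤ ((k:ℝ) - 1 - α) * 2 :=
          le_of_mul_le_mul_right h3 (by linarith : (0:ℝ) < (n:ℝ))
        exact le_of_mul_le_mul_left h4 hpos
      nlinarith
  have h2n : (0:ℝ) ≤ 2 * n := by linarith
  rw [show (2 * (n:ℝ)) = Real.sqrt (2*n) * Real.sqrt (2*n) from (Real.mul_self_sqrt h2n).symm] at hsq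
  exact (mul_self_le_mul_self_iff hr0 (Real.sqrt_nonneg _)).mpr hsq
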